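/- The torus generated by b₁ and b₄ acts transitively on the projectivized BPS set: for all v, w ∈ B there exist a, b ∈ ℝ and λ ∈ ℝ with λ ≠ 0 such that exp(a·b₁)·exp(b·b₄)·v = λ·w. -/

import Mathlib

open Matrix NormedSpace

noncomputable section

def b1 : Matrix (Fin 4) (Fin 4) ℝ := !![0,-1,0,0; 1,0,0,0; 0,0,0,1; 0,0,-1,0]
def b4 : Matrix (Fin 4) (Fin 4) ℝ := !![0,1,0,0; -1,0,0,0; 0,0,0,1; 0,0,-1,0]

/-- The quadratic form `Δ²(m,n,q,h) = m² + n² − q² − h²`. -/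
def Δsq (v : Fin 4 → ℝ) : ℝ := v 0 ^ 2 + v 1 ^ 2 - v 2 ^ 2 - v 3 ^ 2

/-- The set of single-centered BPS charge vectors. -/
def B : Set (Fin 4 → ℝ) := {v | v ≠ 0 ∧ Δsq v = 0}

lemma hb1 : b1 * b1 = -1 := by
  ext i j; fin_cases i <;> fin_cases j <;>
    simp [b1, Matrix.mul_apply, Fin.sum_univ_four, Matrix.one_apply, Matrix.vecHead, Matrix.vecTail]

lemma hb4 : b4 * b4 = -1 := by
  ext i j; fin_cases i <;> fin_cases j <;>
    simp [b4, Matrix.mul_apply, Fin.sum_univ_four, Matrix.one_apply, Matrix.vecHead, Matrix.vecTail]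

lemma exp_of_sq_neg_one {M : Matrix (Fin 4) (Fin 4) ℝ} (hM : M * M = -1) (t : ℝ) :
    exp (t • M) = Real.cos t • (1 : Matrix (Fin 4) (Fin 4) ℝ) + Real.sin t • M := by
  letI : SeminormedRing (Matrix (Fin 4) (Fin 4) ℝ) := Matrix.linftyOpSemiNormedRing
  letI : NormedRing (Matrix (Fin 4) (Fin 4) ℝ) := Matrix.linftyOpNormedRing
  letI : NormedAlgebra ℝ (Matrix (Fin 4) (Fin 4) ℝ) := Matrix.linftyOpNormedAlgebra
  let f : ℂ →ₐ[ℝ] Matrix (Fin 4) (Fin 4) ℝ := Complex.liftAux M hM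
  have hf : Continuous f := f.toLinearMap.continuous_of_finiteDimensional
  have h1 : f (t • Complex.I) = t • M := by
    rw [_root_.map_smul, Complex.liftAux_apply_I]
  calc exp (t • M) = f (exp (t • Complex.I)) := by
        rw [map_exp f hf, h1]; rfl
    _ = _ := by
        have : exp (t • Complex.I) = Complex.exp ((t : ℂ) * Complex.I) := by
          rw [Complex.real_smul, Complex.exp_eq_exp_ℂ]
        rw [this, Complex.exp_mul_I, Complex.liftAux_apply]
        simp [Algebra.algebraMap_eq_smul_one, Complex.cos_ofReal_re, Complex.sin_ofReal_re]

lemma rot_exists {z z' : ℂ} (hz : z ≠ 0) (hz' : z' ≠ 0) :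
    ∃ θ : ℝ, Complex.exp (θ * Complex.I) * z = ((‖z‖ / ‖z'‖ : ℝ) : ℂ) * z' := by
  refine ⟨(z'/z).arg, ?_⟩
  have key := Complex.norm_mul_exp_arg_mul_I (z'/z)
  have h2 : (‖z'/z‖ : ℂ) * (Complex.exp (↑(z'/z).arg * Complex.I) * z) = z' := by
    rw [← mul_assoc, key, div_mul_cancel₀ _ hz]
  rw [norm_div] at h2
  have haz : (‖z‖ : ℂ) ≠ 0 := by exact_mod_cast norm_ne_zero_iff.mpr hz
  have haz' : (‖z'‖ : ℂ) ≠ 0 := by exact_mod_cast norm_ne_zero_iff.mpr hz'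
  push_cast at h2 ⊢
  field_simp at h2 ⊢
  linear_combination h2

lemma rot_real {m n m' n' θ lam : ℝ}
    (h : Complex.exp (θ * Complex.I) * ((m : ℂ) + n * Complex.I) = (lam : ℂ) * ((m' : ℂ) + n' * Complex.I)) :
    Real.cos θ * m - Real.sin θ * n = lam * m' ∧ Real.sin θ * m + Real.cos θ * n = lam * n' := by
  rw [Complex.exp_mul_I, Complex.ext_iff] at h
  obtain ⟨h1, h2⟩ := h
  simp [Complex.add_re, Complex.add_im, Complex.mul_re, Complex.mul_im, Complex.cos_ofReal_re, Complex.sin_ofReal_re, Complex.cos_ofReal_im, Complex.sin_ofReal_im] at h1 h2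
  constructor <;> [linarith [h1]; linarith [h2]]

def R (α β : ℝ) : Matrix (Fin 4) (Fin 4) ℝ :=
  !![Real.cos α, -Real.sin α, 0, 0;
     Real.sin α, Real.cos α, 0, 0;
     0, 0, Real.cos β, Real.sin β;
     0, 0, -Real.sin β, Real.cos β]

lemma exp_prod (a b : ℝ) : exp (a • b1) * exp (b • b4) = R (a - b) (a + b) := by
  rw [exp_of_sq_neg_one hb1, exp_of_sq_neg_one hb4]
  ext i j
  fin_cases i <;> fin_cases j <;>
    simp [R, b1, b4, Matrix.mul_apply, Fin.sum_univ_four, Matrix.one_apply,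
      Matrix.vecHead, Matrix.vecTail,
      Real.cos_sub, Real.sin_sub, Real.cos_add, Real.sin_add] <;> ring

-- nonzero planes
lemma plane_ne {v : Fin 4 → ℝ} (hv : v ∈ B) :
    ((v 0 : ℂ) + v 1 * Complex.I ≠ 0) ∧ ((v 2 : ℂ) + v 3 * Complex.I ≠ 0) ∧
    ‖(v 0 : ℂ) + v 1 * Complex.I‖ = ‖(v 2 : ℂ) + v 3 * Complex.I‖ := by
  obtain ⟨hv0, hvq⟩ := hv
  have hq : v 0 ^ 2 + v 1 ^ 2 = v 2 ^ 2 + v 3 ^ 2 := by unfold Δsq at hvq; linarith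
  have h1 : ‖(v 0 : ℂ) + v 1 * Complex.I‖ = Real.sqrt (v 0 ^ 2 + v 1 ^ 2) := by
    rw [Complex.norm_def, Complex.normSq_add_mul_I]
  have h2 : ‖(v 2 : ℂ) + v 3 * Complex.I‖ = Real.sqrt (v 2 ^ 2 + v 3 ^ 2) := by
    rw [Complex.norm_def, Complex.normSq_add_mul_I]
  have habs : ‖(v 0 : ℂ) + v 1 * Complex.I‖ = ‖(v 2 : ℂ) + v 3 * Complex.I‖ := by
    rw [h1, h2, hq]
  have hne : (v 0 : ℂ) + v 1 * Complex.I ≠ 0 := by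
    intro h
    have e : v 0 = 0 ∧ v 1 = 0 := by
      constructor <;> [simpa using congrArg Complex.re h; simpa using congrArg Complex.im h]
    have : v 2 ^ 2 + v 3 ^ 2 = 0 := by rw [← hq, e.1, e.2]; ring
    have h2z : v 2 = 0 := by nlinarith [sq_nonneg (v 2), sq_nonneg (v 3)]
    have h3z : v 3 = 0 := by nlinarith [sq_nonneg (v 2), sq_nonneg (v 3)]
    apply hv0
    funext i; fin_cases i <;> simp [e.1, e.2, h2z, h3z]
  have hne2 : (v 2 : ℂ) + v 3 * Complex.I ≠ 0 := by
    intro h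
    rw [h, norm_zero] at habs
    exact hne (norm_eq_zero.mp habs)
  exact ⟨hne, hne2, habs⟩

/-- The torus generated by `b₁` and `b₄` acts transitively on the projectivized BPS set. -/
theorem torus_transitive_on_projectivized_BPS :
    ∀ v ∈ B, ∀ w ∈ B, ∃ a b : ℝ, ∃ lam : ℝ, lam ≠ 0 ∧
      (exp (a • b1) * exp (b • b4)).mulVec v = lam • w := by
  intro v hv w hw
  obtain ⟨hv1, hv2, hveq⟩ := plane_ne hv
  obtain ⟨hw1, hw2, hweq⟩ := plane_ne hw
  obtain ⟨θ1, hθ1⟩ := rot_exists hv1 hw1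
  obtain ⟨θ2, hθ2⟩ := rot_exists hv2 hw2
  set lam : ℝ := ‖(v 0 : ℂ) + v 1 * Complex.I‖ / ‖(w 0 : ℂ) + w 1 * Complex.I‖ with hlam
  have hlam2 : ‖(v 2 : ℂ) + v 3 * Complex.I‖ / ‖(w 2 : ℂ) + w 3 * Complex.I‖ = lam := by
    rw [hlam, hveq, hweq]
  have hlamne : lam ≠ 0 := div_ne_zero (norm_ne_zero_iff.mpr hv1) (norm_ne_zero_iff.mpr hw1)
  refine ⟨(θ1 - θ2)/2, -(θ1 + θ2)/2, lam, hlamne, ?_⟩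
  rw [exp_prod]
  have hab1 : (θ1 - θ2)/2 - (-(θ1 + θ2)/2) = θ1 := by ring
  have hab2 : (θ1 - θ2)/2 + (-(θ1 + θ2)/2) = -θ2 := by ring
  rw [hab1, hab2]
  obtain ⟨e1, e2⟩ := rot_real hθ1
  rw [hlam2] at hθ2
  obtain ⟨e3, e4⟩ := rot_real hθ2
  funext i
  fin_cases i <;>
    simp [R, Matrix.mulVec, dotProduct, Fin.sum_univ_four, Real.cos_neg, Real.sin_neg] <;>
    linarith [e1, e2, e3, e4]
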